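/- If a Set-functor F is zippable and cancellative, then for all sets A and B, the map ⟨F(A + !), F(! + B)⟩ : F(A + 1 + B) → F(A + 1) × F(1 + B), collapsing the B-summand resp. the A-summand, is injective. -/

import Mathlib

open CategoryTheory

/-- Characteristic function of {1,2} ⊆ 3. -/
def chi12 : Fin 3 → Fin 2 := fun t => if t = 0 then 0 else 1

/-- Characteristic function of {2} ⊆ 3. -/
def chi2 : Fin 3 → Fin 2 := fun t => if t = 2 then 1 else 0

/-- A Set-functor is cancellative if ⟨F χ_{1,2}, F χ_{2}⟩ : F3 → F2 × F2 is injective. -/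
def Cancellative (F : Type ⥤ Type) : Prop :=
  Function.Injective fun t : F.obj (Fin 3) => (F.map (TypeCat.ofHom chi12) t, F.map (TypeCat.ofHom chi2) t)

/-- A Set-functor is zippable if ⟨F(A + !), F(! + B)⟩ : F(A+B) → F(A+1) × F(1+B)
is injective for all sets A, B. -/
def Zippable (F : Type ⥤ Type) : Prop :=
  ∀ A B : Type, Function.Injective fun t : F.obj (A ⊕ B) =>
    (F.map (TypeCat.ofHom (Sum.map id fun _ => PUnit.unit)) t, F.map (TypeCat.ofHom (Sum.map (fun _ => PUnit.unit) id)) t)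

theorem stmt15 (F : Type ⥤ Type) (hz : Zippable F) (hc : Cancellative F)
    (A B : Type) :
    Function.Injective (fun t : F.obj (A ⊕ (PUnit ⊕ B)) =>
      (F.map (TypeCat.ofHom (Sum.map id fun _ => PUnit.unit)) t,
       F.map (TypeCat.ofHom (Sum.elim (fun _ => Sum.inl PUnit.unit) id)) t)) := by
  intro t1 t2 h
  simp only [Prod.mk.injEq] at h
  obtain ⟨h1, h2⟩ := h
  -- helper: composing F.map
  have comp : ∀ {X Y Z : Type} (f : X → Y) (g : Y → Z) (t : F.obj X),
      F.map (TypeCat.ofHom g) (F.map (TypeCat.ofHom f) t) = F.map (TypeCat.ofHom (fun x => g (f x))) t := by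
    intro X Y Z f g t
    rw [← FunctorToTypes.map_comp_apply]; rfl
  -- maps
  set p : A ⊕ (PUnit ⊕ B) → A ⊕ PUnit := Sum.map id (fun _ => PUnit.unit) with hp
  set q : A ⊕ (PUnit ⊕ B) → PUnit ⊕ B := Sum.elim (fun _ => Sum.inl PUnit.unit) id with hq
  set e : A ⊕ (PUnit ⊕ B) → PUnit ⊕ (PUnit ⊕ B) := Sum.map (fun _ => PUnit.unit) id with he
  set asc : PUnit ⊕ (PUnit ⊕ B) → (PUnit ⊕ PUnit) ⊕ B :=
    Sum.elim (fun u => Sum.inl (Sum.inl u)) (Sum.elim (fun u => Sum.inl (Sum.inr u)) Sum.inr)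
    with hasc
  set invasc : (PUnit ⊕ PUnit) ⊕ B → PUnit ⊕ (PUnit ⊕ B) :=
    Sum.elim (Sum.elim Sum.inl (fun u => Sum.inr (Sum.inl u))) (fun b => Sum.inr (Sum.inr b))
    with hinvasc
  set φ : (PUnit ⊕ PUnit) ⊕ PUnit → Fin 3 :=
    Sum.elim (Sum.elim (fun _ => 0) (fun _ => 1)) (fun _ => 2) with hφ
  set ψ : Fin 3 → (PUnit ⊕ PUnit) ⊕ PUnit :=
    ![Sum.inl (Sum.inl PUnit.unit), Sum.inl (Sum.inr PUnit.unit), Sum.inr PUnit.unit] with hψ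
  -- the elements r_i ∈ F((1+1)+1)
  set R : F.obj (A ⊕ (PUnit ⊕ B)) → F.obj ((PUnit ⊕ PUnit) ⊕ PUnit) :=
    fun t => F.map (TypeCat.ofHom (Sum.map id (fun _ => PUnit.unit))) (F.map (TypeCat.ofHom asc) (F.map (TypeCat.ofHom e) t)) with hR
  -- Step 1: the Fin 3 images of R t1, R t2 coincide via cancellativity
  have hu : F.map (TypeCat.ofHom φ) (R t1) = F.map (TypeCat.ofHom φ) (R t2) := by
    apply hc
    simp only [Prod.mk.injEq]
    constructor
    · -- chi12 component
      have c : ∀ t : F.obj (A ⊕ (PUnit ⊕ B)),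
          F.map (TypeCat.ofHom chi12) (F.map (TypeCat.ofHom φ) (R t)) =
          F.map (TypeCat.ofHom (fun x : A ⊕ PUnit => Sum.elim (fun _ => (0 : Fin 2)) (fun _ => 1) x))
            (F.map (TypeCat.ofHom p) t) := by
        intro t
        rw [hR]
        simp only [comp]
        apply congrFun
        refine congrArg (fun f => ⇑(ConcreteCategory.hom (F.map (TypeCat.ofHom f)))) ?_
        funext x
        rcases x with a | (u | b) <;> rfl
      rw [c, c, h1]
    · -- chi2 component
      have c : ∀ t : F.obj (A ⊕ (PUnit ⊕ B)),
          F.map (TypeCat.ofHom chi2) (F.map (TypeCat.ofHom φ) (R t)) =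
          F.map (TypeCat.ofHom (fun x : PUnit ⊕ B => Sum.elim (fun _ => (0 : Fin 2)) (fun _ => 1) x))
            (F.map (TypeCat.ofHom q) t) := by
        intro t
        rw [hR]
        simp only [comp]
        apply congrFun
        refine congrArg (fun f => ⇑(ConcreteCategory.hom (F.map (TypeCat.ofHom f)))) ?_
        funext x
        rcases x with a | (u | b) <;> rfl
      rw [c, c, h2]
  -- recover R t1 = R t2
  have hRe : R t1 = R t2 := by
    have inv : ∀ t : F.obj (A ⊕ (PUnit ⊕ B)), F.map (TypeCat.ofHom ψ) (F.map (TypeCat.ofHom φ) (R t)) = R t := by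
      intro t
      rw [comp]
      have : (fun x => ψ (φ x)) = (id : (PUnit ⊕ PUnit) ⊕ PUnit → _) := by
        funext x
        rcases x with (⟨⟩ | ⟨⟩) | ⟨⟩ <;> rfl
      rw [this]
      exact FunctorToTypes.map_id_apply F (R t)
    rw [← inv t1, ← inv t2, hu]
  -- Step 2: zippability on (PUnit ⊕ PUnit) and B gives equality of the asc-images
  have hs : F.map (TypeCat.ofHom asc) (F.map (TypeCat.ofHom e) t1) = F.map (TypeCat.ofHom asc) (F.map (TypeCat.ofHom e) t2) := by
    apply hz (PUnit ⊕ PUnit) B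
    simp only [Prod.mk.injEq]
    constructor
    · exact hRe
    · -- the fold component equals q post-composed
      have c : ∀ t : F.obj (A ⊕ (PUnit ⊕ B)),
          F.map (TypeCat.ofHom (Sum.map (fun _ => PUnit.unit) (id : B → B))) (F.map (TypeCat.ofHom asc) (F.map (TypeCat.ofHom e) t)) =
          F.map (TypeCat.ofHom q) t := by
        intro t
        simp only [comp]
        apply congrFun
        refine congrArg (fun f => ⇑(ConcreteCategory.hom (F.map (TypeCat.ofHom f)))) ?_
        funext x
        rcases x with a | (u | b) <;> rfl
      rw [c, c, h2]
  -- Step 3: recover F.map (TypeCat.ofHom e) t1 = F.map (TypeCat.ofHom e) t2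
  have hse : F.map (TypeCat.ofHom e) t1 = F.map (TypeCat.ofHom e) t2 := by
    have inv : ∀ t : F.obj (A ⊕ (PUnit ⊕ B)),
        F.map (TypeCat.ofHom invasc) (F.map (TypeCat.ofHom asc) (F.map (TypeCat.ofHom e) t)) = F.map (TypeCat.ofHom e) t := by
      intro t
      rw [comp (f := asc) (g := invasc)]
      have : (fun x => invasc (asc x)) = (id : PUnit ⊕ (PUnit ⊕ B) → _) := by
        funext x
        rcases x with ⟨⟩ | (⟨⟩ | b) <;> rfl
      rw [this]
      exact FunctorToTypes.map_id_apply F (F.map (TypeCat.ofHom e) t)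
    rw [← inv t1, ← inv t2, hs]
  -- Step 4: zippability on A and (PUnit ⊕ B) finishes
  apply hz A (PUnit ⊕ B)
  simp only [Prod.mk.injEq]
  exact ⟨h1, hse⟩
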